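/- For the model X = ε_X, Y = αX + ε_Y, S = δY + ε_S (diagram X → Y → S) with independent centered errors of positive variances and α ≠ 0, δ ≠ 0, the covariance of X and Y is not collapsible over S: σ_{XY·S} ≠ σ_{XY}; and the regression coefficient is not collapsible either: β_{YX·S} = σ_{XY·S}/σ²_{X·S} ≠ σ_{XY}/σ²_X = β_{YX}. Nevertheless sign(σ_{XY·S}) = sign(σ_{XY}). -/

import Mathlib

open MeasureTheory ProbabilityTheory

/-- Covariance of two real random variables. -/
noncomputable def cov {Ω : Type*} [MeasurableSpace Ω] (μ : Measure Ω) (X Y : Ω → ℝ) : ℝ :=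
  ∫ ω, X ω * Y ω ∂μ - (∫ ω, X ω ∂μ) * (∫ ω, Y ω ∂μ)

lemma l2_mul_integrable {Ω : Type*} [MeasurableSpace Ω] {μ : Measure Ω} {f g : Ω → ℝ}
    (hf : MemLp f 2 μ) (hg : MemLp g 2 μ) : Integrable (fun ω => f ω * g ω) μ := by
  refine Integrable.mono' ((hf.integrable_sq.add hg.integrable_sq).div_const 2)
    (hf.aestronglyMeasurable.mul hg.aestronglyMeasurable) ?_
  filter_upwards with ω
  simp only [Pi.add_apply]
  rw [Real.norm_eq_abs, abs_mul]
  nlinarith [sq_nonneg (|f ω| - |g ω|), sq_abs (f ω), sq_abs (g ω), abs_nonneg (f ω),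
    abs_nonneg (g ω)]

/-- For the diagram X → Y → S with α ≠ 0, δ ≠ 0: neither the covariance nor the
regression coefficient of Y on X is collapsible over S, yet the sign of the covariance
is preserved. -/
theorem stmt10 {Ω : Type*} [MeasurableSpace Ω] (μ : Measure Ω) [IsProbabilityMeasure μ]
    (α δ : ℝ) (hα : α ≠ 0) (hδ : δ ≠ 0) (e : Fin 3 → Ω → ℝ) (X Y S : Ω → ℝ)
    (hmeas : ∀ i, Measurable (e i))
    (hindep : iIndepFun e μ)
    (hL2 : ∀ i, MemLp (e i) 2 μ)
    (hmean : ∀ i, ∫ ω, e i ω ∂μ = 0)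
    (hvar : ∀ i, 0 < cov μ (e i) (e i))
    (hX : ∀ ω, X ω = e 0 ω)
    (hY : ∀ ω, Y ω = α * X ω + e 1 ω)
    (hS : ∀ ω, S ω = δ * Y ω + e 2 ω) :
    cov μ X Y - cov μ X S * cov μ S Y / cov μ S S ≠ cov μ X Y ∧
    (cov μ X Y - cov μ X S * cov μ S Y / cov μ S S)
        / (cov μ X X - (cov μ X S) ^ 2 / cov μ S S)
      ≠ cov μ X Y / cov μ X X ∧
    Real.sign (cov μ X Y - cov μ X S * cov μ S Y / cov μ S S)
      = Real.sign (cov μ X Y) := by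
  -- integrability facts
  have hint : ∀ i j, Integrable (fun ω => e i ω * e j ω) μ :=
    fun i j => l2_mul_integrable (hL2 i) (hL2 j)
  have hint1 : ∀ i, Integrable (e i) μ := fun i => (hL2 i).integrable one_le_two
  -- cross moments vanish
  have hzero : ∀ i j, i ≠ j → ∫ ω, e i ω * e j ω ∂μ = 0 := by
    intro i j hij
    have h2 : (fun ω => e i ω * e j ω) = e i * e j := rfl
    rw [h2, (hindep.indepFun hij).integral_mul_eq_mul_integral (hint1 i).aestronglyMeasurable
      (hint1 j).aestronglyMeasurable, hmean i, hmean j, mul_zero]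
  -- variances
  set v0 := ∫ ω, e 0 ω * e 0 ω ∂μ with hv0
  set v1 := ∫ ω, e 1 ω * e 1 ω ∂μ with hv1
  set v2 := ∫ ω, e 2 ω * e 2 ω ∂μ with hv2
  have hv : ∀ i, 0 < ∫ ω, e i ω * e i ω ∂μ := by
    intro i
    have := hvar i
    simpa [cov, hmean i] using this
  have hv0p : 0 < v0 := hv 0
  have hv1p : 0 < v1 := hv 1
  have hv2p : 0 < v2 := hv 2
  -- express X, Y, S in terms of errors
  have hXe : ∀ ω, X ω = e 0 ω := hX
  have hYe : ∀ ω, Y ω = α * e 0 ω + e 1 ω := fun ω => by rw [hY, hX]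
  have hSe : ∀ ω, S ω = δ * α * e 0 ω + δ * e 1 ω + e 2 ω := fun ω => by
    rw [hS, hYe]; ring
  -- general second moment computation
  have key : ∀ a b c a' b' c' : ℝ,
      ∫ ω, (a * e 0 ω + b * e 1 ω + c * e 2 ω) * (a' * e 0 ω + b' * e 1 ω + c' * e 2 ω) ∂μ
        = a * a' * v0 + b * b' * v1 + c * c' * v2 := by
    intro a b c a' b' c'
    have hfun : (fun ω => (a * e 0 ω + b * e 1 ω + c * e 2 ω)
        * (a' * e 0 ω + b' * e 1 ω + c' * e 2 ω))
        = fun ω => (a * a') * (e 0 ω * e 0 ω) + ((a * b') * (e 0 ω * e 1 ω)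
          + ((a * c') * (e 0 ω * e 2 ω) + ((b * a') * (e 1 ω * e 0 ω)
          + ((b * b') * (e 1 ω * e 1 ω) + ((b * c') * (e 1 ω * e 2 ω)
          + ((c * a') * (e 2 ω * e 0 ω) + ((c * b') * (e 2 ω * e 1 ω)
          + (c * c') * (e 2 ω * e 2 ω)))))))) := funext fun ω => by ring
    rw [hfun]
    repeat rw [integral_add]
    · simp only [integral_const_mul]
      rw [hzero 0 1 (by decide), hzero 0 2 (by decide), hzero 1 0 (by decide),
        hzero 1 2 (by decide), hzero 2 0 (by decide), hzero 2 1 (by decide)]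
      ring
    all_goals
      first
      | exact ((hint _ _).const_mul _)
      | (repeat' apply Integrable.add) <;> exact ((hint _ _).const_mul _)
  have keymean : ∀ a b c : ℝ, ∫ ω, (a * e 0 ω + b * e 1 ω + c * e 2 ω) ∂μ = 0 := by
    intro a b c
    have i01 : Integrable (fun ω => a * e 0 ω + b * e 1 ω) μ :=
      ((hint1 0).const_mul a).add ((hint1 1).const_mul b)
    rw [integral_add i01 ((hint1 2).const_mul c),
      integral_add ((hint1 0).const_mul a) ((hint1 1).const_mul b),
      integral_const_mul, integral_const_mul, integral_const_mul,
      hmean 0, hmean 1, hmean 2]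
    ring
  -- covariance computation helper
  have covcalc : ∀ (U V : Ω → ℝ) (a b c a' b' c' : ℝ),
      (∀ ω, U ω = a * e 0 ω + b * e 1 ω + c * e 2 ω) →
      (∀ ω, V ω = a' * e 0 ω + b' * e 1 ω + c' * e 2 ω) →
      cov μ U V = a * a' * v0 + b * b' * v1 + c * c' * v2 := by
    intro U V a b c a' b' c' hU hV
    have h1 : ∫ ω, U ω * V ω ∂μ
        = ∫ ω, (a * e 0 ω + b * e 1 ω + c * e 2 ω)
            * (a' * e 0 ω + b' * e 1 ω + c' * e 2 ω) ∂μ := by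
      congr 1; funext ω; rw [hU, hV]
    have h2 : ∫ ω, U ω ∂μ = ∫ ω, (a * e 0 ω + b * e 1 ω + c * e 2 ω) ∂μ := by
      congr 1; funext ω; rw [hU]
    have h3 : ∫ ω, V ω ∂μ = ∫ ω, (a' * e 0 ω + b' * e 1 ω + c' * e 2 ω) ∂μ := by
      congr 1; funext ω; rw [hV]
    rw [cov, h1, h2, h3, key, keymean, keymean, mul_zero, sub_zero]
  have hXform : ∀ ω, X ω = 1 * e 0 ω + 0 * e 1 ω + 0 * e 2 ω := fun ω => by
    rw [hXe]; ring
  have hYform : ∀ ω, Y ω = α * e 0 ω + 1 * e 1 ω + 0 * e 2 ω := fun ω => by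
    rw [hYe]; ring
  have hSform : ∀ ω, S ω = (δ * α) * e 0 ω + δ * e 1 ω + 1 * e 2 ω := fun ω => by
    rw [hSe]; ring
  have cXY : cov μ X Y = α * v0 := by
    rw [covcalc X Y 1 0 0 α 1 0 hXform hYform]; ring
  have cXS : cov μ X S = δ * α * v0 := by
    rw [covcalc X S 1 0 0 (δ * α) δ 1 hXform hSform]; ring
  have cSY : cov μ S Y = δ * α ^ 2 * v0 + δ * v1 := by
    rw [covcalc S Y (δ * α) δ 1 α 1 0 hSform hYform]; ring
  have cSS : cov μ S S = δ ^ 2 * α ^ 2 * v0 + δ ^ 2 * v1 + v2 := by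
    rw [covcalc S S (δ * α) δ 1 (δ * α) δ 1 hSform hSform]; ring
  have cXX : cov μ X X = v0 := by
    rw [covcalc X X 1 0 0 1 0 0 hXform hXform]; ring
  have hD : 0 < δ ^ 2 * α ^ 2 * v0 + δ ^ 2 * v1 + v2 := by positivity
  have hDne : (δ ^ 2 * α ^ 2 * v0 + δ ^ 2 * v1 + v2) ≠ 0 := ne_of_gt hD
  -- the partial covariance simplifies
  have hpc : cov μ X Y - cov μ X S * cov μ S Y / cov μ S S
      = α * v0 * v2 / (δ ^ 2 * α ^ 2 * v0 + δ ^ 2 * v1 + v2) := by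
    rw [cXY, cXS, cSY, cSS]
    field_simp
    ring
  refine ⟨?_, ?_, ?_⟩
  · rw [Ne, sub_eq_self, div_eq_zero_iff]
    have hδ2 : 0 < δ ^ 2 := lt_of_le_of_ne (sq_nonneg δ) (Ne.symm (pow_ne_zero 2 hδ))
    have hα2 : 0 < α ^ 2 := lt_of_le_of_ne (sq_nonneg α) (Ne.symm (pow_ne_zero 2 hα))
    rintro (h | h)
    · rw [cXS, cSY] at h
      have hfac : δ * α * v0 * (δ * α ^ 2 * v0 + δ * v1)
          = (δ ^ 2 * (α * v0)) * (α ^ 2 * v0 + v1) := by ring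
      rw [hfac] at h
      rcases mul_eq_zero.1 h with h' | h'
      · rcases mul_eq_zero.1 h' with h'' | h''
        · exact (ne_of_gt hδ2) h''
        · exact mul_ne_zero hα (ne_of_gt hv0p) h''
      · nlinarith
    · rw [cSS] at h; exact hDne h
  · rw [hpc, cXY, cXS, cSS, cXX]
    have hδ2 : 0 < δ ^ 2 := lt_of_le_of_ne (sq_nonneg δ) (Ne.symm (pow_ne_zero 2 hδ))
    have hE : 0 < δ ^ 2 * v1 + v2 := by positivity
    have hden : v0 - (δ * α * v0) ^ 2 / (δ ^ 2 * α ^ 2 * v0 + δ ^ 2 * v1 + v2)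
        = v0 * (δ ^ 2 * v1 + v2) / (δ ^ 2 * α ^ 2 * v0 + δ ^ 2 * v1 + v2) := by
      field_simp; ring
    have hRHS : α * v0 / v0 = α := by field_simp
    rw [hden, hRHS]
    have hLHS : α * v0 * v2 / (δ ^ 2 * α ^ 2 * v0 + δ ^ 2 * v1 + v2)
        / (v0 * (δ ^ 2 * v1 + v2) / (δ ^ 2 * α ^ 2 * v0 + δ ^ 2 * v1 + v2))
        = α * v2 / (δ ^ 2 * v1 + v2) := by
      rw [div_div_div_cancel_right₀, mul_comm α v0, mul_assoc,
        mul_div_mul_left _ _ (ne_of_gt hv0p)]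
      exact hDne
    rw [hLHS]
    intro h
    rw [div_eq_iff (ne_of_gt hE)] at h
    have h3 : α * (δ ^ 2 * v1) = 0 := by linear_combination -h
    exact mul_ne_zero hα (ne_of_gt (by positivity : (0:ℝ) < δ ^ 2 * v1)) h3
  · rw [hpc, cXY]
    rcases lt_or_gt_of_ne hα with hneg | hpos
    · have h1 : α * v0 < 0 := mul_neg_of_neg_of_pos hneg hv0p
      have h2 : α * v0 * v2 / (δ ^ 2 * α ^ 2 * v0 + δ ^ 2 * v1 + v2) < 0 :=
        div_neg_of_neg_of_pos (mul_neg_of_neg_of_pos h1 hv2p) hD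
      rw [Real.sign_of_neg h2, Real.sign_of_neg h1]
    · have h1 : 0 < α * v0 := mul_pos hpos hv0p
      have h2 : 0 < α * v0 * v2 / (δ ^ 2 * α ^ 2 * v0 + δ ^ 2 * v1 + v2) :=
        div_pos (mul_pos (mul_pos hpos hv0p) hv2p) hD
      rw [Real.sign_of_pos h2, Real.sign_of_pos h1]
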